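/- Fix λ, μ, T > 0, α ∈ (0,T), and set a = 1 − μ/λ. For each r₂ > max(a,1) let r₁ = a − r₂, let w = ( λ r₂² + (μ−λ) r₂ ) / μ, define y_{r₂}(t) = ( r₂(1−r₁) + r₁(r₂−1) φ(t) ) / ( 1 − r₁ + (r₂−1) φ(t) ) with φ(t) = e^{(t−T)λ(r₂−r₁)}, and z_{r₂}(t) = w / y_{r₂}(t). Then sup_{t ∈ [0, T−α]} | z_{r₂}(t)/r₂ − λ/μ | tends to 0 as r₂ → ∞. -/

import Mathlib

set_option maxHeartbeats 1000000 in
/-- Uniform convergence `z_{r₂}(t)/r₂ → λ/μ` on `[0, T−α]` as `r₂ → ∞`. -/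
theorem stmt_10 (lam mu T α : ℝ) (hlam : 0 < lam) (hmu : 0 < mu) (hT : 0 < T)
    (hα0 : 0 < α) (hαT : α < T)
    (a : ℝ) (ha : a = 1 - mu / lam)
    (y z : ℝ → ℝ → ℝ)
    (hy : ∀ r₂ t, y r₂ t =
      (r₂ * (1 - (a - r₂)) +
        (a - r₂) * (r₂ - 1) * Real.exp ((t - T) * lam * (r₂ - (a - r₂)))) /
      (1 - (a - r₂) + (r₂ - 1) * Real.exp ((t - T) * lam * (r₂ - (a - r₂)))))
    (hz : ∀ r₂ t, z r₂ t = ((lam * r₂ ^ 2 + (mu - lam) * r₂) / mu) / y r₂ t) :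
    ∀ ε > 0, ∃ R : ℝ, ∀ r₂ : ℝ, max a 1 < r₂ → R ≤ r₂ →
      ∀ t ∈ Set.Icc (0 : ℝ) (T - α), |z r₂ t / r₂ - lam / mu| < ε := by
  intro ε hε
  have hc0 : 0 < α * lam := mul_pos hα0 hlam
  have ha1 : a < 1 := by
    rw [ha]; have : 0 < mu / lam := div_pos hmu hlam; linarith
  refine ⟨max ((4 / (α * lam) ^ 2 + a) / 2) (2 + (2 * lam + mu) / (mu * ε)), ?_⟩
  intro r₂ hmax hR t ht
  obtain ⟨ht0, htT⟩ := ht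
  have hr1 : 1 < r₂ := lt_of_le_of_lt (le_max_right a 1) hmax
  have hra : a < r₂ := lt_of_le_of_lt (le_max_left a 1) hmax
  have h2ra : 4 / (α * lam) ^ 2 ≤ 2 * r₂ - a := by
    have := le_trans (le_max_left _ _) hR; linarith
  have hεr : 2 + (2 * lam + mu) / (mu * ε) ≤ r₂ := le_trans (le_max_right _ _) hR
  have hεr' : 2 * lam + mu ≤ (r₂ - 2) * (mu * ε) := by
    rw [← div_le_iff₀ (mul_pos hmu hε)]; linarith
  set s : ℝ := 2 * r₂ - a with hs
  have hs0 : 0 < s := by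
    have h4 : 0 < 4 / (α * lam) ^ 2 := by positivity
    linarith
  set u : ℝ := α * lam * s with hu
  have hu0 : 0 < u := mul_pos hc0 hs0
  set φ : ℝ := Real.exp ((t - T) * lam * (r₂ - (a - r₂))) with hφ
  clear_value s u φ
  have hφ0 : 0 < φ := hφ ▸ Real.exp_pos _
  have hexp : (t - T) * lam * (r₂ - (a - r₂)) ≤ -u := by
    have h2 : 0 < lam * s := mul_pos hlam hs0
    have h1 : t - T ≤ -α := by linarith
    calc (t - T) * lam * (r₂ - (a - r₂)) = (t - T) * (lam * s) := by rw [hs]; ring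
      _ ≤ -α * (lam * s) := by nlinarith
      _ = -u := by rw [hu]; ring
  have hφle : φ ≤ Real.exp (-u) := by rw [hφ]; exact Real.exp_le_exp.mpr hexp
  have hexpu : u ^ 2 / 4 ≤ Real.exp u := by
    have h := Real.add_one_le_exp (u / 2)
    have h2 : Real.exp u = Real.exp (u / 2) * Real.exp (u / 2) := by
      rw [← Real.exp_add]; ring_nf
    nlinarith [Real.exp_pos (u / 2)]
  have hE : s * φ ≤ 1 := by
    have h1 : s * φ ≤ s * Real.exp (-u) := by nlinarith
    have h2 : s * Real.exp (-u) ≤ 1 := by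
      rw [Real.exp_neg, mul_inv_le_iff₀ (Real.exp_pos u), one_mul]
      have hsu : s ≤ u ^ 2 / 4 := by
        have h3 : 4 ≤ (α * lam) ^ 2 * s := by
          rw [← div_le_iff₀' (by positivity)]; exact h2ra
        have h5 : 4 * s ≤ (α * lam) ^ 2 * s * s :=
          mul_le_mul_of_nonneg_right h3 hs0.le
        rw [hu]; nlinarith [h5]
      linarith
    linarith
  have hN : 0 < 1 - (a - r₂) := by linarith
  have hD : 0 < r₂ - 1 := by linarith
  have hden : 0 < 1 - (a - r₂) + (r₂ - 1) * φ := by positivity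
  have hy1 : r₂ - y r₂ t = s * (r₂ - 1) * φ / (1 - (a - r₂) + (r₂ - 1) * φ) := by
    rw [hy, ← hφ, hs]
    field_simp
    ring
  have hge : 0 ≤ r₂ - y r₂ t := by
    rw [hy1]
    exact div_nonneg (mul_nonneg (mul_nonneg hs0.le hD.le) hφ0.le) hden.le
  have hle : r₂ - y r₂ t ≤ s * φ := by
    rw [hy1, div_le_iff₀ hden]
    have e1 : 0 ≤ s * φ * (2 - a) :=
      mul_nonneg (mul_nonneg hs0.le hφ0.le) (by linarith)
    have e2 : 0 ≤ s * (φ * φ) * (r₂ - 1) :=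
      mul_nonneg (mul_nonneg hs0.le (mul_nonneg hφ0.le hφ0.le)) hD.le
    nlinarith [e1, e2]
  have hle1 : r₂ - y r₂ t ≤ 1 := le_trans hle hE
  have hyge : r₂ - 1 ≤ y r₂ t := by linarith
  have hy0 : 0 < y r₂ t := by linarith
  have heq : z r₂ t / r₂ - lam / mu =
      (lam * (r₂ - y r₂ t) + (mu - lam)) / (mu * y r₂ t) := by
    rw [hz]
    field_simp
    ring
  rw [heq, abs_lt]
  have hmy : 0 < mu * y r₂ t := mul_pos hmu hy0
  constructor
  · rw [lt_div_iff₀ hmy]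
    nlinarith [mul_pos hmu hε]
  · rw [div_lt_iff₀ hmy]
    nlinarith [mul_pos hmu hε]
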